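/- Let n, k, r be positive integers with (r+1) | n and k+1 ≤ n. Let R_1,…,R_{n/(r+1)} be a partition of {1,…,n} into blocks of size r+1 and 𝕊_{k+1} = {S ⊆ {1,…,n} : |S| = k+1, |S ∩ R_i| ≤ r ∀i}. Then |𝕊_{k+1}| = Σ_{j=0}^{⌊(k+1)/(r+1)⌋} (-1)^j · C(n/(r+1), j) · C(n - j(r+1), k+1 - j(r+1)). -/

import Mathlib

open Finset

lemma card_supersets {α : Type*} [Fintype α] [DecidableEq α] (A : Finset α) {m : ℕ}
    (h : A.card ≤ m) :
    (univ.filter fun S : Finset α => S.card = m ∧ A ⊆ S).card =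
      (Fintype.card α - A.card).choose (m - A.card) := by
  have : (Fintype.card α - A.card).choose (m - A.card) =
      (Finset.powersetCard (m - A.card) Aᶜ).card := by
    rw [card_powersetCard, card_compl]
  rw [this]
  apply Finset.card_bij' (fun S _ => S \ A) (fun t _ => t ∪ A)
  · intro S hS
    simp only [mem_filter, mem_univ, true_and] at hS
    rw [mem_powersetCard]
    constructor
    · intro x hx
      simp only [mem_sdiff] at hx
      simpa using hx.2
    · rw [card_sdiff_of_subset hS.2, hS.1]
  · intro t ht
    rw [mem_powersetCard] at ht
    have hdisj : Disjoint t A := by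
      rw [Finset.disjoint_right]
      intro a ha hat
      have := ht.1 hat
      simp at this
      exact this ha
    simp only [mem_filter, mem_univ, true_and]
    refine ⟨?_, subset_union_right⟩
    rw [card_union_of_disjoint hdisj, ht.2]
    omega
  · intro S hS
    simp only [mem_filter, mem_univ, true_and] at hS
    exact sdiff_union_of_subset hS.2
  · intro t ht
    rw [mem_powersetCard] at ht
    have hdisj : Disjoint t A := by
      rw [Finset.disjoint_right]
      intro a ha hat
      have := ht.1 hat
      simp at this
      exact this ha
    exact union_sdiff_cancel_right hdisj

theorem S_k1_inclusion_exclusion (n k r : ℕ)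
    (hn : 0 < n) (hk : 0 < k) (hr : 0 < r)
    (hdvd : (r + 1) ∣ n) (hkn : k + 1 ≤ n)
    (R : Fin (n / (r + 1)) → Finset (Fin n))
    (hcover : Finset.univ.biUnion R = Finset.univ)
    (hdisj : ∀ i j, i ≠ j → Disjoint (R i) (R j))
    (hsize : ∀ i, (R i).card = r + 1) :
    (((Finset.univ : Finset (Finset (Fin n))).filter
        (fun S => S.card = k + 1 ∧ ∀ i, (S ∩ R i).card ≤ r)).card : ℤ) =
      ∑ j ∈ Finset.range ((k + 1) / (r + 1) + 1),
        (-1 : ℤ) ^ j * Nat.choose (n / (r + 1)) j *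
          Nat.choose (n - j * (r + 1)) (k + 1 - j * (r + 1)) := by
  classical
  have hmn : n / (r + 1) * (r + 1) = n := Nat.div_mul_cancel hdvd
  -- rewrite the intersection condition
  have hcond : ∀ S : Finset (Fin n),
      (∀ i, (S ∩ R i).card ≤ r) ↔ (univ.filter fun i => R i ⊆ S) = ∅ := by
    intro S
    rw [Finset.filter_eq_empty_iff]
    constructor
    · intro h i _ hsub
      have := h i
      rw [Finset.inter_eq_right.mpr hsub, hsize i] at this
      omega
    · intro h i
      by_contra hlt
      push_neg at hlt
      have h1 : (R i).card ≤ (S ∩ R i).card := by rw [hsize]; omega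
      exact h (mem_univ i)
        (Finset.inter_eq_right.mp
          (Finset.eq_of_subset_of_card_le Finset.inter_subset_right h1))
  -- card of a union of blocks
  have hUcard : ∀ T : Finset (Fin (n / (r + 1))), (T.biUnion R).card = T.card * (r + 1) := by
    intro T
    rw [Finset.card_biUnion (fun i _ j _ hij => hdisj i j hij)]
    simp [hsize, mul_comm]
  -- step 1: indicator form
  have step1 : (((univ : Finset (Finset (Fin n))).filter
        (fun S => S.card = k + 1 ∧ ∀ i, (S ∩ R i).card ≤ r)).card : ℤ) =
      ∑ S ∈ univ.filter (fun S : Finset (Fin n) => S.card = k + 1),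
        ∑ T ∈ (univ.filter fun i => R i ⊆ S).powerset, (-1 : ℤ) ^ T.card := by
    have : ∀ S ∈ univ.filter (fun S : Finset (Fin n) => S.card = k + 1),
        ∑ T ∈ (univ.filter fun i => R i ⊆ S).powerset, (-1 : ℤ) ^ T.card =
        if (∀ i, (S ∩ R i).card ≤ r) then 1 else 0 := by
      intro S _
      rw [Finset.sum_powerset_neg_one_pow_card]
      simp only [hcond S]
    rw [Finset.sum_congr rfl this, Finset.sum_boole, Finset.filter_filter]
  rw [step1]
  -- step 2: swap sums
  have hpow : ∀ S : Finset (Fin n),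
      (univ.filter fun i : Fin (n / (r + 1)) => R i ⊆ S).powerset =
        univ.filter fun T : Finset (Fin (n / (r + 1))) => T.biUnion R ⊆ S := by
    intro S
    ext T
    rw [mem_powerset, mem_filter]
    simp only [mem_univ, true_and, Finset.biUnion_subset]
    constructor
    · intro h i hi
      exact (mem_filter.mp (h hi)).2
    · intro h i hi
      exact mem_filter.mpr ⟨mem_univ i, h i hi⟩
  have step2 : (∑ S ∈ univ.filter (fun S : Finset (Fin n) => S.card = k + 1),
        ∑ T ∈ (univ.filter fun i => R i ⊆ S).powerset, (-1 : ℤ) ^ T.card) =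
      ∑ T : Finset (Fin (n / (r + 1))), (-1 : ℤ) ^ T.card *
        ((univ.filter fun S : Finset (Fin n) =>
          S.card = k + 1 ∧ T.biUnion R ⊆ S).card : ℤ) := by
    simp_rw [hpow]
    have h1 : ∀ S ∈ filter (fun S : Finset (Fin n) => S.card = k + 1) univ,
        ∑ T ∈ filter (fun T : Finset (Fin (n / (r + 1))) => T.biUnion R ⊆ S) univ,
          (-1 : ℤ) ^ T.card =
        ∑ T : Finset (Fin (n / (r + 1))),
          if T.biUnion R ⊆ S then (-1 : ℤ) ^ T.card else 0 :=
      fun S _ => Finset.sum_filter _ _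
    rw [Finset.sum_congr rfl h1, Finset.sum_comm]
    refine Finset.sum_congr rfl fun T _ => ?_
    rw [← Finset.sum_filter, Finset.sum_const, ← Finset.filter_filter,
      nsmul_eq_mul, mul_comm]
  rw [step2]
  -- step 3: evaluate counts and group by cardinality
  have hcount : ∀ T : Finset (Fin (n / (r + 1))),
      ((univ.filter fun S : Finset (Fin n) =>
          S.card = k + 1 ∧ T.biUnion R ⊆ S).card : ℤ) =
        if T.card * (r + 1) ≤ k + 1 then
          ((n - T.card * (r + 1)).choose (k + 1 - T.card * (r + 1)) : ℤ) else 0 := by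
    intro T
    by_cases h : T.card * (r + 1) ≤ k + 1
    · rw [if_pos h]
      rw [card_supersets (T.biUnion R) (by rw [hUcard]; exact h)]
      rw [hUcard, Fintype.card_fin]
    · rw [if_neg h]
      norm_cast
      rw [Finset.card_eq_zero, Finset.filter_eq_empty_iff]
      rintro S - ⟨hS1, hS2⟩
      have := Finset.card_le_card hS2
      rw [hUcard, hS1] at this
      omega
  simp_rw [hcount]
  -- group by cardinality of T
  have hgroup : (∑ T : Finset (Fin (n / (r + 1))), (-1 : ℤ) ^ T.card *
        (if T.card * (r + 1) ≤ k + 1 then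
          ((n - T.card * (r + 1)).choose (k + 1 - T.card * (r + 1)) : ℤ) else 0)) =
      ∑ j ∈ Finset.range (n / (r + 1) + 1), (-1 : ℤ) ^ j * ((n / (r + 1)).choose j : ℤ) *
        (if j * (r + 1) ≤ k + 1 then
          ((n - j * (r + 1)).choose (k + 1 - j * (r + 1)) : ℤ) else 0) := by
    rw [show (univ : Finset (Finset (Fin (n / (r + 1))))) =
        (univ : Finset (Fin (n / (r + 1)))).powerset from Finset.powerset_univ.symm,
      Finset.powerset_card_disjiUnion]
    refine (Finset.sum_disjiUnion _ _ _).trans ?_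
    refine Finset.sum_congr (by simp) fun j _ => ?_
    rw [Finset.sum_congr rfl (fun T hT => by
        rw [(Finset.mem_powersetCard.1 hT).2]),
      Finset.sum_const, card_powersetCard, card_univ, Fintype.card_fin,
      nsmul_eq_mul]
    ring
  rw [hgroup]
  -- restrict the range
  have hqm : (k + 1) / (r + 1) + 1 ≤ n / (r + 1) + 1 := by
    have : (k + 1) / (r + 1) ≤ n / (r + 1) := Nat.div_le_div_right hkn
    omega
  rw [← Finset.sum_subset (Finset.range_subset_range.mpr hqm)]
  · refine Finset.sum_congr rfl fun j hj => ?_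
    rw [Finset.mem_range] at hj
    have : j * (r + 1) ≤ k + 1 := by
      rw [← Nat.le_div_iff_mul_le (by omega)]
      omega
    rw [if_pos this]
  · intro j _ hj
    rw [Finset.mem_range, not_lt] at hj
    have : ¬ j * (r + 1) ≤ k + 1 := by
      rw [← Nat.le_div_iff_mul_le (by omega)]
      omega
    rw [if_neg this, mul_zero]
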